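/- In a Coxeter system (W,S), if A ⊆ S and r ∈ ⟨A⟩ is conjugate in W to an element of S, then r is conjugate in ⟨A⟩ to an element of A. -/

import Mathlib

open List

namespace CoxeterSystem

attribute [local instance] Classical.propDecidable

variable {B W : Type*} [Group W] {M : CoxeterMatrix B} (cs : CoxeterSystem M W)

local prefix:100 "ss" => cs.simple
local prefix:100 "π" => cs.wordProd
local prefix:100 "ris" => cs.rightInvSeq

/-- The basic involution of the reflection-cocycle action. -/
noncomputable def crpSigmaFun (i : B) (p : W × ZMod 2) : W × ZMod 2 :=
  (ss i * p.1 * ss i, p.2 + if p.1 = ss i then 1 else 0)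

lemma crpZmod2 (c : ZMod 2) : c + c = 0 := by revert c; decide

lemma crpSigmaFun_involutive (i : B) : Function.Involutive (cs.crpSigmaFun i) := by
  intro p
  unfold crpSigmaFun
  have hss := cs.simple_mul_simple_self i
  have h1 : ss i * (ss i * p.1 * ss i) * ss i = p.1 := by
    calc ss i * (ss i * p.1 * ss i) * ss i
        = (ss i * ss i) * p.1 * (ss i * ss i) := by group
      _ = p.1 := by rw [hss, one_mul, mul_one]
  have h2 : (ss i * p.1 * ss i = ss i) ↔ (p.1 = ss i) := by
    constructor
    · intro h
      have h' : ss i * (ss i * p.1 * ss i) * ss i = ss i * ss i * ss i := by rw [h]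
      rw [h1, hss, one_mul] at h'
      exact h'
    · intro h; rw [h, hss, one_mul]
  ext
  · exact h1
  · show p.2 + _ + _ = p.2
    simp only [h2]
    rw [add_assoc, crpZmod2, add_zero]

/-- The reflection-cocycle permutation attached to a simple reflection. -/
noncomputable def crpSigma (i : B) : Equiv.Perm (W × ZMod 2) :=
  (cs.crpSigmaFun_involutive i).toPerm

lemma crpSigma_apply (i : B) (p : W × ZMod 2) : cs.crpSigma i p = cs.crpSigmaFun i p := rfl

/-- Key computation: composing the cocycle permutations along a word. -/
lemma crp_prod_map_sigma_apply (ω : List B) (p : W × ZMod 2) :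
    (ω.map cs.crpSigma).prod p =
      (π ω * p.1 * (π ω)⁻¹, p.2 + ((ris ω).count p.1 : ZMod 2)) := by
  induction ω generalizing p with
  | nil => simp [CoxeterSystem.rightInvSeq]
  | cons i ω ih =>
    rw [List.map_cons, List.prod_cons, Equiv.Perm.mul_apply, ih, crpSigma_apply]
    unfold crpSigmaFun
    have hiff : (π ω * p.1 * (π ω)⁻¹ = ss i) ↔ (p.1 = (π ω)⁻¹ * ss i * π ω) := by
      constructor
      · intro h; rw [← h]; group
      · intro h; rw [h]; group
    ext
    · show ss i * (π ω * p.1 * (π ω)⁻¹) * ss i = π (i :: ω) * p.1 * (π (i :: ω))⁻¹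
      rw [cs.wordProd_cons, mul_inv_rev, cs.inv_simple]
      group
    · show p.2 + ((ris ω).count p.1 : ZMod 2) + _ = p.2 + _
      rw [CoxeterSystem.rightInvSeq, List.count_cons]
      by_cases h : p.1 = (π ω)⁻¹ * ss i * π ω
      · rw [if_pos (hiff.mpr h)]
        have hbeq : ((π ω)⁻¹ * ss i * π ω == p.1) = true := by
          rw [beq_iff_eq]; exact h.symm
        rw [hbeq]
        simp only [if_pos (hiff.mpr h)]
        push_cast
        ring_nf
      · rw [if_neg (fun hh => h (hiff.mp hh))]
        have hbeq : ((π ω)⁻¹ * ss i * π ω == p.1) = false := by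
          rw [beq_eq_false_iff_ne]
          exact fun hh => h hh.symm
        rw [hbeq]
        push_cast
        ring_nf

/-- The word consisting of `m` repetitions of `[i, j]`. -/
def crpRepWord (i j : B) (m : ℕ) : List B := (List.replicate m [i, j]).flatten

lemma crpRepWord_succ (i j : B) (m : ℕ) :
    crpRepWord i j (m + 1) = i :: j :: crpRepWord i j m := by
  simp [crpRepWord, List.replicate_succ]

lemma crp_wordProd_repWord (i j : B) (m : ℕ) :
    π (crpRepWord i j m) = (ss i * ss j) ^ m := by
  induction m with
  | zero => simp [crpRepWord]
  | succ m ih =>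
    rw [crpRepWord_succ, cs.wordProd_cons, cs.wordProd_cons, ih, pow_succ']
    group

lemma crp_simple_mul_zpow (i j : B) (k : ℤ) :
    ss j * (ss i * ss j) ^ k = (ss i * ss j) ^ (-k) * ss j := by
  have hconj : ss j * (ss i * ss j) * (ss j)⁻¹ = (ss i * ss j)⁻¹ := by
    rw [cs.inv_simple, mul_inv_rev, cs.inv_simple, cs.inv_simple]
    calc ss j * (ss i * ss j) * ss j = ss j * ss i * (ss j * ss j) := by group
      _ = ss j * ss i := by rw [cs.simple_mul_simple_self, mul_one]
  have h3 : ss j * (ss i * ss j) ^ k * (ss j)⁻¹ = (ss i * ss j) ^ (-k) := by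
    calc ss j * (ss i * ss j) ^ k * (ss j)⁻¹
        = (ss j * (ss i * ss j) * (ss j)⁻¹) ^ k := conj_zpow.symm
      _ = ((ss i * ss j)⁻¹) ^ k := by rw [hconj]
      _ = (ss i * ss j) ^ (-k) := by rw [inv_zpow, ← zpow_neg]
  calc ss j * (ss i * ss j) ^ k
      = (ss j * (ss i * ss j) ^ k * (ss j)⁻¹) * ss j := by group
    _ = (ss i * ss j) ^ (-k) * ss j := by rw [h3]

/-- Closed form for the right inversion sequence of the repeated word. -/
lemma crp_rightInvSeq_repWord (i j : B) (m : ℕ) :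
    ris (crpRepWord i j m) =
      (List.range (2 * m)).map
        (fun (k : ℕ) => (ss i * ss j) ^ ((k : ℤ) + 1 - 2 * (m : ℤ)) * ss j) := by
  induction m with
  | zero => simp [crpRepWord, CoxeterSystem.rightInvSeq]
  | succ m ih =>
    rw [crpRepWord_succ]
    rw [CoxeterSystem.rightInvSeq, CoxeterSystem.rightInvSeq, ih]
    have hπ : π (j :: crpRepWord i j m) = ss j * (ss i * ss j) ^ m := by
      rw [cs.wordProd_cons, cs.crp_wordProd_repWord]
    have hπ2 : π (crpRepWord i j m) = (ss i * ss j) ^ m := cs.crp_wordProd_repWord i j m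
    have hrange : List.range (2 * (m + 1)) =
        0 :: 1 :: (List.range (2 * m)).map (fun (k : ℕ) => k + 2) := by
      rw [show 2 * (m + 1) = (2 * m + 1) + 1 by ring, List.range_succ_eq_map,
        List.range_succ_eq_map, List.map_cons, List.map_map]
      rfl
    rw [hrange, List.map_cons, List.map_cons, List.map_map]
    set x : W := ss i * ss j with hx
    have hmn : ss j * x ^ m = x ^ (-(m:ℤ)) * ss j := by
      rw [← zpow_natCast x m]; exact cs.crp_simple_mul_zpow i j (m : ℤ)
    congr 1
    · -- head entry
      rw [hπ]
      have hji : ss j * ss i = x ^ (-1 : ℤ) := by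
        rw [zpow_neg_one, hx, mul_inv_rev, cs.inv_simple, cs.inv_simple]
      calc (ss j * x ^ m)⁻¹ * ss i * (ss j * x ^ m)
          = (x ^ m)⁻¹ * ((ss j * ss i) * (ss j * x ^ m)) := by
            rw [mul_inv_rev, cs.inv_simple]; group
        _ = (x ^ m)⁻¹ * (x ^ (-1:ℤ) * (x ^ (-(m:ℤ)) * ss j)) := by rw [hji, hmn]
        _ = (x ^ (-(m:ℤ)) * x ^ (-1:ℤ) * x ^ (-(m:ℤ))) * ss j := by
            rw [← zpow_natCast x m, ← zpow_neg]; group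
        _ = x ^ (((0:ℕ) : ℤ) + 1 - 2 * ((m + 1 : ℕ) : ℤ)) * ss j := by
            rw [← zpow_add, ← zpow_add]
            congr 1
            push_cast; ring
    congr 1
    · -- second entry
      rw [hπ2]
      calc (x ^ m)⁻¹ * ss j * x ^ m = (x ^ m)⁻¹ * (ss j * x ^ m) := by group
        _ = x ^ (-(m:ℤ)) * (x ^ (-(m:ℤ)) * ss j) := by
            rw [hmn, ← zpow_natCast x m, ← zpow_neg]
        _ = (x ^ (-(m:ℤ)) * x ^ (-(m:ℤ))) * ss j := by group
        _ = x ^ (((1:ℕ) : ℤ) + 1 - 2 * ((m + 1 : ℕ) : ℤ)) * ss j := by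
            rw [← zpow_add]
            congr 1
            push_cast; ring
    · -- remaining entries
      symm
      apply List.map_congr_left
      intro k _
      simp only [Function.comp_apply]
      show x ^ (((k + 2 : ℕ) : ℤ) + 1 - 2 * ((m + 1 : ℕ) : ℤ)) * ss j
          = x ^ ((k : ℤ) + 1 - 2 * (m : ℤ)) * ss j
      congr 2
      push_cast
      ring

lemma crp_sigma_liftable : M.IsLiftable cs.crpSigma := by
  intro i j
  set m := M i j with hm
  have hflat : (List.map cs.crpSigma (crpRepWord i j m)).prod
      = (cs.crpSigma i * cs.crpSigma j) ^ m := by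
    rw [crpRepWord, List.map_flatten, List.map_replicate, List.prod_flatten,
      List.map_replicate, List.prod_replicate]
    congr 1
  rw [← hflat]
  have hrel : ((ss i * ss j : W)) ^ (m : ℤ) = 1 := by
    rw [zpow_natCast, hm, cs.simple_mul_simple_pow i j]
  have hπ1 : π (crpRepWord i j m) = 1 := by
    rw [cs.crp_wordProd_repWord, hm, cs.simple_mul_simple_pow i j]
  have hcount : ∀ t : W, (((ris (crpRepWord i j m)).count t : ℕ) : ZMod 2) = 0 := by
    intro t
    have hr2 : List.range (2 * m) = List.range m ++ (List.range m).map (fun (k : ℕ) => m + k) := by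
      rw [show 2 * m = m + m from two_mul m, List.range_add]
    have hsplit : ris (crpRepWord i j m) =
        ((List.range m).map (fun (k : ℕ) => (ss i * ss j) ^ ((k : ℤ) + 1 - 2 * (m : ℤ)) * ss j)) ++
        ((List.range m).map (fun (k : ℕ) => (ss i * ss j) ^ ((k : ℤ) + 1 - 2 * (m : ℤ)) * ss j)) := by
      rw [cs.crp_rightInvSeq_repWord, hr2, List.map_append, List.map_map]
      congr 1
      apply List.map_congr_left
      intro k _
      show (ss i * ss j) ^ (((m + k : ℕ) : ℤ) + 1 - 2 * (m : ℤ)) * ss j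
          = (ss i * ss j) ^ ((k : ℤ) + 1 - 2 * (m : ℤ)) * ss j
      have he : (((m + k : ℕ)) : ℤ) + 1 - 2 * (m : ℤ) = ((k : ℤ) + 1 - 2 * (m : ℤ)) + (m : ℤ) := by
        push_cast; ring
      rw [he, zpow_add, hrel, mul_one]
    rw [hsplit, List.count_append]
    push_cast
    rw [crpZmod2]
  ext p
  · show (((List.map cs.crpSigma (crpRepWord i j m)).prod) p).1 = p.1
    rw [crp_prod_map_sigma_apply, hπ1]
    show 1 * p.1 * 1⁻¹ = p.1
    group
  · show (((List.map cs.crpSigma (crpRepWord i j m)).prod) p).2 = p.2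
    rw [crp_prod_map_sigma_apply]
    show p.2 + _ = p.2
    rw [hcount p.1, add_zero]

/-- The reflection-cocycle homomorphism. -/
noncomputable def crpPhi : W →* Equiv.Perm (W × ZMod 2) :=
  cs.lift ⟨cs.crpSigma, cs.crp_sigma_liftable⟩

lemma crpPhi_simple (i : B) : cs.crpPhi (ss i) = cs.crpSigma i :=
  cs.lift_apply_simple cs.crp_sigma_liftable i

lemma crpPhi_wordProd (ω : List B) : cs.crpPhi (π ω) = (ω.map cs.crpSigma).prod := by
  unfold CoxeterSystem.wordProd
  rw [map_list_prod, List.map_map]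
  congr 1
  apply List.map_congr_left
  intro i _
  exact cs.crpPhi_simple i

lemma crpPhi_apply (w : W) (x : W) (c : ZMod 2) :
    cs.crpPhi w (x, c) = (w * x * w⁻¹, c + (cs.crpPhi w (x, 0)).2) := by
  obtain ⟨ω, rfl⟩ := cs.wordProd_surjective w
  rw [cs.crpPhi_wordProd, crp_prod_map_sigma_apply, crp_prod_map_sigma_apply]
  show _ = (_, c + (0 + _))
  rw [zero_add, add_comm]

/-- The cocycle value of a reflection at itself is `1`. -/
lemma crpPhi_self (r : W) (hr : cs.IsReflection r) : (cs.crpPhi r (r, 0)).2 = 1 := by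
  obtain ⟨w, i, hwi⟩ := hr
  set c : ZMod 2 := (cs.crpPhi w⁻¹ (r, 0)).2 with hc
  have h1 : cs.crpPhi w⁻¹ (r, 0) = (ss i, c) := by
    rw [cs.crpPhi_apply]
    show (w⁻¹ * r * w⁻¹⁻¹, 0 + c) = (ss i, c)
    rw [zero_add]
    congr 1
    rw [hwi]; group
  have h2 : cs.crpPhi w (ss i, c) = (r, 0) := by
    calc cs.crpPhi w (ss i, c) = cs.crpPhi w (cs.crpPhi w⁻¹ (r, 0)) := by rw [h1]
      _ = (cs.crpPhi w * cs.crpPhi w⁻¹) (r, 0) := rfl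
      _ = cs.crpPhi (w * w⁻¹) (r, 0) := by rw [map_mul]
      _ = (r, 0) := by rw [mul_inv_cancel, map_one]; rfl
  set d : ZMod 2 := (cs.crpPhi w (ss i, 0)).2 with hd
  have hcd : c + d = 0 := by
    have h2' := congrArg Prod.snd h2
    rw [cs.crpPhi_apply] at h2'
    exact h2'
  have h3 : cs.crpSigma i (ss i, c) = (ss i, c + 1) := by
    rw [crpSigma_apply]
    unfold crpSigmaFun
    rw [if_pos rfl]
    congr 1
    rw [cs.simple_mul_simple_self, one_mul]
  have h4 : (cs.crpPhi w (ss i, c + 1)).2 = (c + 1) + d := by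
    rw [cs.crpPhi_apply]
  calc (cs.crpPhi r (r, 0)).2
      = (cs.crpPhi (w * ss i * w⁻¹) (r, 0)).2 := by rw [hwi]
    _ = (cs.crpPhi w (cs.crpPhi (ss i) (cs.crpPhi w⁻¹ (r, 0)))).2 := by
        rw [map_mul, map_mul]; rfl
    _ = (cs.crpPhi w (ss i, c + 1)).2 := by rw [h1, cs.crpPhi_simple, h3]
    _ = (c + 1) + d := h4
    _ = (c + d) + 1 := by ring
    _ = 1 := by rw [hcd, zero_add]

lemma crp_prod_mem_closure {A : Set B} (ω : List B) (hA : ∀ i ∈ ω, i ∈ A) :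
    π ω ∈ Subgroup.closure (cs.simple '' A) := by
  induction ω with
  | nil => rw [cs.wordProd_nil]; exact Subgroup.one_mem _
  | cons i ω ih =>
    rw [cs.wordProd_cons]
    exact Subgroup.mul_mem _
      (Subgroup.subset_closure ⟨i, hA i List.mem_cons_self, rfl⟩)
      (ih fun j hj => hA j (List.mem_cons_of_mem i hj))

lemma crp_exists_word {A : Set B} {r : W} (hrA : r ∈ Subgroup.closure (cs.simple '' A)) :
    ∃ ω : List B, (∀ i ∈ ω, i ∈ A) ∧ π ω = r := by
  induction hrA using Subgroup.closure_induction with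
  | mem x hx =>
    obtain ⟨a, ha, rfl⟩ := hx
    exact ⟨[a], by simpa using ha, by simp⟩
  | one => exact ⟨[], by simp, by simp⟩
  | mul x y hx hy ihx ihy =>
    obtain ⟨ω₁, h₁, hw₁⟩ := ihx
    obtain ⟨ω₂, h₂, hw₂⟩ := ihy
    refine ⟨ω₁ ++ ω₂, ?_, ?_⟩
    · intro i hi
      rcases List.mem_append.mp hi with h | h
      exacts [h₁ i h, h₂ i h]
    · rw [cs.wordProd_append, hw₁, hw₂]
  | inv x hx ihx =>
    obtain ⟨ω, h, hw⟩ := ihx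
    exact ⟨ω.reverse, fun i hi => h i (List.mem_reverse.mp hi),
      by rw [cs.wordProd_reverse, hw]⟩

lemma crp_mem_ris_conj {A : Set B} (ω : List B) (hA : ∀ i ∈ ω, i ∈ A) {t : W}
    (ht : t ∈ ris ω) :
    ∃ u ∈ Subgroup.closure (cs.simple '' A), ∃ a ∈ A, t = u * cs.simple a * u⁻¹ := by
  induction ω with
  | nil => simp [CoxeterSystem.rightInvSeq] at ht
  | cons i ω ih =>
    rw [CoxeterSystem.rightInvSeq] at ht
    rcases List.mem_cons.mp ht with h | h
    · refine ⟨(π ω)⁻¹, Subgroup.inv_mem _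
        (cs.crp_prod_mem_closure ω fun j hj => hA j (List.mem_cons_of_mem i hj)),
        i, hA i List.mem_cons_self, ?_⟩
      rw [h, inv_inv]
    · exact ih (fun j hj => hA j (List.mem_cons_of_mem i hj)) h

end CoxeterSystem

/-- In a Coxeter system `(W,S)`, a reflection of `(W,S)` (a conjugate of a simple
reflection) lying in the visual subgroup `⟨A⟩`, `A ⊆ S`, is a reflection of the
Coxeter system `(⟨A⟩, A)`: it is conjugate in `⟨A⟩` to an element of `A`. -/
theorem isReflection_of_mem_visual {B W : Type*} [Group W] {M : CoxeterMatrix B}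
    (cs : CoxeterSystem M W) (A : Set B) (r : W)
    (hr : cs.IsReflection r)
    (hrA : r ∈ Subgroup.closure (cs.simple '' A)) :
    ∃ u ∈ Subgroup.closure (cs.simple '' A), ∃ a ∈ A, r = u * cs.simple a * u⁻¹ := by
  letI : DecidableEq W := Classical.decEq W
  obtain ⟨ω, hωA, hωr⟩ := cs.crp_exists_word hrA
  have h2 : cs.crpPhi r (r, 0) = (cs.wordProd ω * r * (cs.wordProd ω)⁻¹,
      0 + ((cs.rightInvSeq ω).count r : ZMod 2)) := by
    rw [← hωr, cs.crpPhi_wordProd, CoxeterSystem.crp_prod_map_sigma_apply]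
  have hparity : (((cs.rightInvSeq ω).count r : ℕ) : ZMod 2) = 1 := by
    have h1 := cs.crpPhi_self r hr
    rw [h2] at h1
    rwa [zero_add] at h1
  have hmem : r ∈ cs.rightInvSeq ω := by
    by_contra hnot
    rw [List.count_eq_zero_of_not_mem hnot] at hparity
    simp at hparity
  exact cs.crp_mem_ris_conj ω hωA hmem
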